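/- Let d₁, d₂ be positive integers, A, B, C, D complex matrices of sizes d₁×d₁, d₁×d₂, d₂×d₁, d₂×d₂, and J = [[A, B], [C, D]]. For all unit vectors v ∈ ℂ^{d₁} and w ∈ ℂ^{d₂}, every eigenvalue μ of the 2×2 matrix J_{v,w} = [[v*Av, v*Bw], [w*Cv, w*Dw]] lies in the numerical range of J: there exists a unit vector x ∈ ℂ^{d₁+d₂} with x*Jx = μ. That is, the quadratic numerical range is contained in the numerical range. -/

import Mathlib

open Matrix

theorem stmt18 {d₁ d₂ : ℕ} (hd₁ : 0 < d₁) (hd₂ : 0 < d₂)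
    (A : Matrix (Fin d₁) (Fin d₁) ℂ) (B : Matrix (Fin d₁) (Fin d₂) ℂ)
    (C : Matrix (Fin d₂) (Fin d₁) ℂ) (D : Matrix (Fin d₂) (Fin d₂) ℂ) :
    ∀ v : Fin d₁ → ℂ, ∀ w : Fin d₂ → ℂ, star v ⬝ᵥ v = 1 → star w ⬝ᵥ w = 1 →
      ∀ μ ∈ spectrum ℂ
          !![star v ⬝ᵥ (A *ᵥ v), star v ⬝ᵥ (B *ᵥ w);
             star w ⬝ᵥ (C *ᵥ v), star w ⬝ᵥ (D *ᵥ w)],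
        ∃ x : (Fin d₁ ⊕ Fin d₂) → ℂ,
          star x ⬝ᵥ x = 1 ∧ star x ⬝ᵥ ((Matrix.fromBlocks A B C D) *ᵥ x) = μ := by
  intro v w hv hw μ hμ
  set a := star v ⬝ᵥ (A *ᵥ v) with ha
  set b := star v ⬝ᵥ (B *ᵥ w) with hb
  set c := star w ⬝ᵥ (C *ᵥ v) with hc
  set d := star w ⬝ᵥ (D *ᵥ w) with hd
  rw [spectrum.mem_iff] at hμ
  have hdet : (algebraMap ℂ (Matrix (Fin 2) (Fin 2) ℂ) μ - !![a,b;c,d]).det = 0 := by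
    by_contra h
    exact hμ ((Matrix.isUnit_iff_isUnit_det _).mpr (isUnit_iff_ne_zero.mpr h))
  obtain ⟨ξ, hξ0, hξ⟩ := Matrix.exists_mulVec_eq_zero_iff.mpr hdet
  have heig : !![a,b;c,d] *ᵥ ξ = μ • ξ := by
    rw [Matrix.sub_mulVec, Algebra.algebraMap_eq_smul_one, Matrix.smul_mulVec,
      Matrix.one_mulVec] at hξ
    linear_combination (norm := module) -hξ
  have h0 : a * ξ 0 + b * ξ 1 = μ * ξ 0 := by
    have := congrFun heig 0
    simpa [Matrix.mulVec, dotProduct, Fin.sum_univ_two] using this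
  have h1 : c * ξ 0 + d * ξ 1 = μ * ξ 1 := by
    have := congrFun heig 1
    simpa [Matrix.mulVec, dotProduct, Fin.sum_univ_two] using this
  set r : ℝ := Complex.normSq (ξ 0) + Complex.normSq (ξ 1) with hr
  have hrpos : 0 < r := by
    rcases Function.ne_iff.mp hξ0 with ⟨i, hi⟩
    have h0n := Complex.normSq_nonneg (ξ 0)
    have h1n := Complex.normSq_nonneg (ξ 1)
    fin_cases i
    · have h : 0 < Complex.normSq (ξ 0) := by
        simpa using Complex.normSq_pos.mpr (by simpa using hi)
      simp only [hr]; linarith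
    · have h : 0 < Complex.normSq (ξ 1) := by
        simpa using Complex.normSq_pos.mpr (by simpa using hi)
      simp only [hr]; linarith
  set s : ℝ := (Real.sqrt r)⁻¹ with hs
  have hs2 : (s : ℂ) * (s : ℂ) * (r : ℂ) = 1 := by
    have : (s:ℝ) * s * r = 1 := by
      rw [hs, ← Real.sqrt_mul_self hrpos.le]
      field_simp
      rw [Real.sq_sqrt (Real.sqrt_nonneg _)]
    exact_mod_cast congrArg (fun x : ℝ => (x : ℂ)) this
  set α : ℂ := (s : ℂ) * ξ 0 with hα
  set β : ℂ := (s : ℂ) * ξ 1 with hβ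
  have hnorm : star α * α + star β * β = 1 := by
    have h0' : star (ξ 0) * ξ 0 = (Complex.normSq (ξ 0) : ℂ) := by
      simp [Complex.star_def, Complex.normSq_eq_conj_mul_self]
    have h1' : star (ξ 1) * ξ 1 = (Complex.normSq (ξ 1) : ℂ) := by
      simp [Complex.star_def, Complex.normSq_eq_conj_mul_self]
    have hss : star (s:ℂ) = (s:ℂ) := by simp [Complex.star_def]
    calc star α * α + star β * β
        = (s:ℂ) * (s:ℂ) * (star (ξ 0) * ξ 0 + star (ξ 1) * ξ 1) := by
          rw [hα, hβ, star_mul', star_mul', hss]; ring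
      _ = 1 := by rw [h0', h1', ← hs2, hr, Complex.ofReal_add, mul_add]
  refine ⟨Sum.elim (α • v) (β • w), ?_, ?_⟩
  · have hstar : star (Sum.elim (α • v) (β • w)) = Sum.elim (star α • star v) (star β • star w) := by
      funext i; cases i <;> simp [Pi.star_apply, star_smul]
    rw [hstar, sumElim_dotProduct_sumElim, smul_dotProduct, dotProduct_smul,
      smul_dotProduct, dotProduct_smul, hv, hw]
    simpa [smul_eq_mul] using hnorm
  · have hstar : star (Sum.elim (α • v) (β • w)) = Sum.elim (star α • star v) (star β • star w) := by
      funext i; cases i <;> simp [Pi.star_apply, star_smul]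
    rw [Matrix.fromBlocks_mulVec, hstar, sumElim_dotProduct_sumElim]
    simp only [Sum.elim_comp_inl, Sum.elim_comp_inr, Matrix.mulVec_smul]
    rw [smul_dotProduct, dotProduct_add, dotProduct_smul, dotProduct_smul,
      smul_dotProduct, dotProduct_add, dotProduct_smul, dotProduct_smul]
    simp only [smul_eq_mul, ← ha, ← hb, ← hc, ← hd]
    have e0 : a * α + b * β = μ * α := by rw [hα, hβ]; linear_combination (s:ℂ) * h0
    have e1 : c * α + d * β = μ * β := by rw [hα, hβ]; linear_combination (s:ℂ) * h1
    calc star α * (α * a + β * b) + star β * (α * c + β * d)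
        = star α * (a * α + b * β) + star β * (c * α + d * β) := by ring
      _ = star α * (μ * α) + star β * (μ * β) := by rw [e0, e1]
      _ = μ * (star α * α + star β * β) := by ring
      _ = μ := by rw [hnorm, mul_one]
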